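/- Let F be a field of characteristic not 2, K a quadratic étale F-algebra with involution τ (so either K is a quadratic field extension or K ≅ F × F with τ swapping coordinates), and m a positive even integer. Set m₀ = m/gcd(2,m) = m/2 and K¹ = {x ∈ K^× : xτ(x) = 1}. If 4 ∤ m (so m₀ is odd) or K ≅ F × F and F contains a primitive m-th root of unity, then −1 ∈ (K¹)^{m₀}, hence (K¹)^{m₀} = (−1)·(K¹)^{m₀}. If 4 ∣ m, K is a field, and all m-th roots of unity of K lie in F, then −1 ∉ (K¹)^{m₀}, hence (K¹)^{m₀} ∩ (−1)·(K¹)^{m₀} = ∅. -/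

import Mathlib

/-- For a quadratic étale algebra `K` with involution `τ`, norm-one group `K¹` and
`m₀ = m/2` (`m` even): `(K¹)^{m₀} = (−1)·(K¹)^{m₀}` if `4 ∤ m`, or if `K ≅ F × F` and `F`
has a primitive `m`-th root of unity; whereas `(K¹)^{m₀} ∩ (−1)·(K¹)^{m₀} = ∅` if `4 ∣ m`,
`K` is a field and all `m`-th roots of unity of `K` lie in `F`. -/
theorem stmt_19 (m : ℕ) (hm : 0 < m) (hme : 2 ∣ m) :
    ((¬ 4 ∣ m) → ∀ (K : Type*) [CommRing K] (τ : K ≃+* K), (∀ x, τ (τ x) = x) →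
      ∀ x : K, (∃ z : K, z * τ z = 1 ∧ z ^ (m / 2) = x) ↔
        (∃ z : K, z * τ z = 1 ∧ -(z ^ (m / 2)) = x)) ∧
    (∀ (F : Type*) [Field F] (ζ : F), IsPrimitiveRoot ζ m →
      ∀ x : F × F,
        (∃ z : F × F, z * (z.2, z.1) = 1 ∧ z ^ (m / 2) = x) ↔
        (∃ z : F × F, z * (z.2, z.1) = 1 ∧ -(z ^ (m / 2)) = x)) ∧
    ((4 ∣ m) → ∀ (K : Type*) [Field K] (τ : K ≃+* K), (∀ x, τ (τ x) = x) →
      (2 : K) ≠ 0 → (∀ x : K, x ^ m = 1 → τ x = x) →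
      ∀ x : K, ¬ ((∃ z : K, z * τ z = 1 ∧ z ^ (m / 2) = x) ∧
        (∃ z : K, z * τ z = 1 ∧ -(z ^ (m / 2)) = x))) := by
  refine ⟨?_, ?_, ?_⟩
  · -- part 1 : m/2 odd, use z ↦ -z
    intro h4 K _ τ _ x
    have hodd : Odd (m / 2) := by
      rcases hme with ⟨k, rfl⟩
      rcases Nat.even_or_odd k with ⟨j, rfl⟩ | h
      · exact absurd ⟨j, by ring⟩ h4
      · simpa using h
    constructor
    · rintro ⟨z, hz1, hz2⟩
      exact ⟨-z, by simp [mul_comm, hz1], by rw [hodd.neg_pow, neg_neg, hz2]⟩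
    · rintro ⟨z, hz1, hz2⟩
      exact ⟨-z, by simp [mul_comm, hz1], by rw [hodd.neg_pow, hz2]⟩
  · -- part 2 : F × F with primitive m-th root, use z ↦ z * (ζ, ζ⁻¹)
    intro F _ ζ hζ x
    have hζ0 : ζ ≠ 0 := hζ.ne_zero hm.ne'
    have hhalf : ζ ^ (m / 2) = -1 := by
      have hsq : ζ ^ (m / 2) * ζ ^ (m / 2) = 1 := by
        rw [← pow_add, show m / 2 + m / 2 = m by omega, hζ.pow_eq_one]
      have hne : ζ ^ (m / 2) ≠ 1 :=
        hζ.pow_ne_one_of_pos_of_lt (by omega) (by omega)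
      rcases mul_self_eq_one_iff.mp hsq with h | h
      · exact absurd h hne
      · exact h
    have hhalfinv : (ζ⁻¹) ^ (m / 2) = -1 := by
      rw [inv_pow, hhalf, inv_neg, inv_one]
    set w : F × F := (ζ, ζ⁻¹) with hwdef
    have hw : w ^ (m / 2) = -1 := by
      rw [hwdef, Prod.pow_mk]
      rw [hhalf, hhalfinv]
      exact Prod.ext_iff.mpr ⟨by simp, by simp⟩
    have hnorm : ∀ z : F × F, z * (z.2, z.1) = 1 →
        (z * w) * ((z * w).2, (z * w).1) = 1 := by
      intro z hz
      have h1 := congrArg Prod.fst hz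
      have h2 := congrArg Prod.snd hz
      simp only [Prod.fst_mul, Prod.snd_mul, Prod.mk_mul_mk, Prod.fst_one,
        Prod.snd_one] at h1 h2
      refine Prod.ext_iff.mpr ⟨?_, ?_⟩ <;>
        simp only [Prod.fst_mul, Prod.snd_mul, Prod.mk_mul_mk, Prod.fst_one,
          Prod.snd_one, hwdef]
      · field_simp; linear_combination h1
      · field_simp; linear_combination h2
    constructor
    · rintro ⟨z, hz1, hz2⟩
      refine ⟨z * w, hnorm z hz1, ?_⟩
      rw [mul_pow, hz2, hw]
      ring
    · rintro ⟨z, hz1, hz2⟩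
      refine ⟨z * w, hnorm z hz1, ?_⟩
      rw [mul_pow, hw, ← hz2]
      ring
  · -- part 3
    intro h4 K _ τ hτ h2 hroots x ⟨⟨z₁, hz1, hx1⟩, ⟨z₂, hz2, hx2⟩⟩
    have hz₂0 : z₂ ≠ 0 := by rintro rfl; simp at hz2
    have hx0 : x ≠ 0 := by
      rintro rfl
      exact hz₂0 (pow_eq_zero_iff (by omega) |>.mp (neg_eq_zero.mp hx2))
    set ξ := z₁ * z₂⁻¹ with hξ
    have hξhalf : ξ ^ (m / 2) = -1 := by
      rw [hξ, mul_pow, inv_pow, hx1, show z₂ ^ (m / 2) = -x by linear_combination -hx2]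
      field_simp
    have hξm : ξ ^ m = 1 := by
      rw [show m = (m / 2) * 2 from (Nat.div_mul_cancel hme).symm, pow_mul, hξhalf,
        neg_one_sq]
    have hτξ : τ ξ = ξ := hroots ξ hξm
    have hsq : ξ * ξ = 1 := by
      have key : ξ * τ ξ = 1 := by
        rw [hξ, map_mul, map_inv₀]
        calc z₁ * z₂⁻¹ * (τ z₁ * (τ z₂)⁻¹)
            = (z₁ * τ z₁) * (z₂ * τ z₂)⁻¹ := by rw [mul_inv]; ring
          _ = 1 := by rw [hz1, hz2]; simp
      rwa [hτξ] at key
    have heven : Even (m / 2) := by rcases h4 with ⟨k, rfl⟩; exact ⟨k, by omega⟩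
    rcases mul_self_eq_one_iff.mp hsq with h | h
    · rw [h, one_pow] at hξhalf; exact h2 (by linear_combination hξhalf)
    · rw [h, heven.neg_one_pow] at hξhalf; exact h2 (by linear_combination hξhalf)
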